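/- Suppose nonnegative real sequences x_t^{(i)} (indexed by t ≥ 1 and i ∈ ℤ) satisfy: x_t^{(i)} = 0 whenever i < 0 or i ≥ t; x_1^{(0)} ≤ 2^{(g/2+1)}; and x_{t+1}^{(i)} ≤ 3·2^{g/2−1}·max(x_t^{(i)}, 1)·max(x_t^{(i−1)}, 1) for all t, i, where g ≥ 2 is a fixed constant. Then x_t^{(i)} ≤ 2^{(g/2+1)(C(t+1, i+1) − 1)} for all t ≥ 1 and all i, where C(n, k) denotes the binomial coefficient. -/

import Mathlib

/-- The binomial coefficient `C(n, k)` for `k : ℤ`, with `C(n, k) = 0` for `k < 0`. -/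
def binomZ (n : ℕ) (k : ℤ) : ℕ := if k < 0 then 0 else n.choose k.toNat

/-- If nonnegative reals `x_t^{(i)}` (`t ≥ 1`, `i ∈ ℤ`) vanish for `i < 0`
or `i ≥ t`, satisfy `x_1^{(0)} ≤ 2^{g/2+1}` and the recursion
`x_{t+1}^{(i)} ≤ 3·2^{g/2−1}·max(x_t^{(i)},1)·max(x_t^{(i−1)},1)` with `g ≥ 2`, then
`x_t^{(i)} ≤ 2^{(g/2+1)(C(t+1, i+1) − 1)}` for all `t ≥ 1` and all `i`. -/
theorem stmt_13 (g : ℝ) (hg : 2 ≤ g) (x : ℕ → ℤ → ℝ)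
    (hx0 : ∀ t i, 0 ≤ x t i)
    (hz : ∀ (t : ℕ) (i : ℤ), (i < 0 ∨ (t : ℤ) ≤ i) → x t i = 0)
    (hbase : x 1 0 ≤ (2 : ℝ) ^ (g / 2 + 1))
    (hrec : ∀ (t : ℕ) (i : ℤ),
      x (t + 1) i ≤ 3 * (2 : ℝ) ^ (g / 2 - 1) * max (x t i) 1 * max (x t (i - 1)) 1) :
    ∀ t : ℕ, 1 ≤ t → ∀ i : ℤ,
      x t i ≤ (2 : ℝ) ^ ((g / 2 + 1) * ((binomZ (t + 1) (i + 1) : ℝ) - 1)) := by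
  intro t ht
  induction t with
  | zero => exact absurd ht (by norm_num)
  | succ t ih =>
    intro i
    rcases lt_or_ge i 0 with hi | hi
    · rw [hz _ _ (Or.inl hi)]
      positivity
    rcases le_or_gt ((t : ℤ) + 1) i with hi2 | hi2
    · rw [hz (t + 1) i (Or.inr (by push_cast; omega))]
      positivity
    rcases Nat.eq_zero_or_pos t with rfl | ht1
    · have hi0 : i = 0 := by omega
      subst hi0
      have hb2 : binomZ (0 + 1 + 1) (0 + 1) = 2 := by decide
      rw [hb2]
      norm_num
      exact hbase
    · have ih' := ih ht1
      set B : ℝ := g / 2 + 1 with hBdef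
      have hitoNat : (i + 1).toNat = i.toNat + 1 := by omega
      have ha : binomZ (t + 1) (i + 1) = (t + 1).choose (i.toNat + 1) := by
        simp [binomZ, hitoNat, show ¬(i + 1 < 0) by omega]
      have hbb : binomZ (t + 1) i = (t + 1).choose i.toNat := by
        simp [binomZ, show ¬(i < 0) by omega]
      have hP : binomZ (t + 1 + 1) (i + 1) = binomZ (t + 1) i + binomZ (t + 1) (i + 1) := by
        rw [ha, hbb]
        simp [binomZ, show ¬(i + 1 < 0) by omega, hitoNat]
        exact Nat.choose_succ_succ (t + 1) i.toNat
      have ha1 : 1 ≤ binomZ (t + 1) (i + 1) := by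
        rw [ha]; exact Nat.choose_pos (by omega)
      have hb1 : 1 ≤ binomZ (t + 1) i := by
        rw [hbb]; exact Nat.choose_pos (by omega)
      have hBpos : (0 : ℝ) < B := by rw [hBdef]; linarith
      have h1 : max (x t i) 1 ≤ (2 : ℝ) ^ (B * ((binomZ (t + 1) (i + 1) : ℝ) - 1)) := by
        apply max_le (ih' i)
        apply Real.one_le_rpow (by norm_num)
        have : (1 : ℝ) ≤ (binomZ (t + 1) (i + 1) : ℝ) := by exact_mod_cast ha1
        nlinarith
      have h2 : max (x t (i - 1)) 1 ≤ (2 : ℝ) ^ (B * ((binomZ (t + 1) i : ℝ) - 1)) := by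
        have hih := ih' (i - 1)
        rw [sub_add_cancel] at hih
        apply max_le hih
        apply Real.one_le_rpow (by norm_num)
        have : (1 : ℝ) ≤ (binomZ (t + 1) i : ℝ) := by exact_mod_cast hb1
        nlinarith
      have h3 : 3 * (2 : ℝ) ^ (g / 2 - 1) ≤ (2 : ℝ) ^ B := by
        have he : (2 : ℝ) ^ B = 2 ^ (g / 2 - 1) * 2 ^ (2 : ℝ) := by
          rw [← Real.rpow_add (by norm_num), hBdef]; ring_nf
        have h4 : (2 : ℝ) ^ (2 : ℝ) = 4 := by
          rw [show ((2 : ℝ) : ℝ) = ((2 : ℕ) : ℝ) by norm_num, Real.rpow_natCast]; norm_num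
        rw [he, h4]
        have hp : (0 : ℝ) < (2 : ℝ) ^ (g / 2 - 1) := Real.rpow_pos_of_pos (by norm_num) _
        nlinarith
      have hm1 : (0 : ℝ) ≤ max (x t i) 1 := le_max_of_le_right zero_le_one
      have hm2 : (0 : ℝ) ≤ max (x t (i - 1)) 1 := le_max_of_le_right zero_le_one
      calc x (t + 1) i ≤ 3 * (2 : ℝ) ^ (g / 2 - 1) * max (x t i) 1 * max (x t (i - 1)) 1 :=
            hrec t i
        _ ≤ (2 : ℝ) ^ B * (2 : ℝ) ^ (B * ((binomZ (t + 1) (i + 1) : ℝ) - 1))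
              * (2 : ℝ) ^ (B * ((binomZ (t + 1) i : ℝ) - 1)) := by
            apply mul_le_mul _ h2 hm2 (by positivity)
            apply mul_le_mul h3 h1 hm1 (by positivity)
        _ = (2 : ℝ) ^ (B * ((binomZ (t + 1 + 1) (i + 1) : ℝ) - 1)) := by
            rw [← Real.rpow_add (by norm_num), ← Real.rpow_add (by norm_num)]
            congr 1
            have hc : (binomZ (t + 1 + 1) (i + 1) : ℝ)
                = (binomZ (t + 1) i : ℝ) + (binomZ (t + 1) (i + 1) : ℝ) := by
              rw [hP]; push_cast; ring
            rw [hc]; ring
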